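/- Let M ∈ ℝⁿˣⁿ be symmetric positive semidefinite with eigendecomposition M = Σᵢ λᵢ·uᵢuᵢᵀ, λ₁ > λ₂ ≥ … ≥ λₙ ≥ 0, and let f(x) = (1/4)·‖xxᵀ − M‖_F². Then: (i) x ∈ ℝⁿ is a critical point of f (i.e., ∇f(x) = (xxᵀ − M)x = 0) if and only if Mx = ‖x‖₂²·x; in particular 0 and ±√λₖ·uₖ (1 ≤ k ≤ n) are critical points; (ii) ∇²f(±√λ₁·u₁) ≻ 0, so ±√λ₁·u₁ are local minima (and they are global minima of f); (iii) for each 2 ≤ k ≤ n with λₖ > 0, the points ±√λₖ·uₖ satisfy λ_min(∇²f(±√λₖ·uₖ)) < 0 < λ_max(∇²f(±√λₖ·uₖ)), i.e., they are strict saddle points; (iv) ∇²f(0) = −M ⪯ 0, so 0 is a local maximum if λₙ > 0 and a strict saddle point if λₙ = 0 and λ₁ > 0. -/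

import Mathlib

open Matrix

/-- The Euclidean (ℓ₂) norm of a vector in `ℝⁿ`. -/
noncomputable def l2norm {p : ℕ} (v : Fin p → ℝ) : ℝ :=
  Real.sqrt (∑ i, v i ^ 2)

/-- The Frobenius norm of a real matrix. -/
noncomputable def frobNorm {p q : ℕ} (A : Matrix (Fin p) (Fin q) ℝ) : ℝ :=
  Real.sqrt (∑ i, ∑ j, (A i j) ^ 2)

/-- The rank-1 matrix factorization loss `f(x) = ¼‖xxᵀ − M‖_F²`. -/
noncomputable def rankOneLoss {n : ℕ} (M : Matrix (Fin n) (Fin n) ℝ) (x : Fin n → ℝ) : ℝ :=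
  (1 / 4) * frobNorm (Matrix.vecMulVec x x - M) ^ 2

/-- The Hessian `∇²f(x) = ‖x‖₂² Iₙ + 2xxᵀ − M` of the rank-1 factorization loss. -/
noncomputable def rankOneHess {n : ℕ} (M : Matrix (Fin n) (Fin n) ℝ) (x : Fin n → ℝ) :
    Matrix (Fin n) (Fin n) ℝ :=
  l2norm x ^ 2 • (1 : Matrix (Fin n) (Fin n) ℝ) + (2 : ℝ) • Matrix.vecMulVec x x - M

lemma l2norm_sq {p : ℕ} (v : Fin p → ℝ) : l2norm v ^ 2 = ∑ i, v i ^ 2 := by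
  rw [l2norm, Real.sq_sqrt]
  exact Finset.sum_nonneg fun i _ => sq_nonneg _

lemma frobNorm_sq {p q : ℕ} (A : Matrix (Fin p) (Fin q) ℝ) :
    frobNorm A ^ 2 = ∑ i, ∑ j, (A i j) ^ 2 := by
  rw [frobNorm, Real.sq_sqrt]
  exact Finset.sum_nonneg fun i _ => Finset.sum_nonneg fun j _ => sq_nonneg _

lemma vecMulVec_mulVec' {p : ℕ} (x y v : Fin p → ℝ) :
    (Matrix.vecMulVec x y).mulVec v = (dotProduct y v) • x := by
  funext i
  simp [Matrix.mulVec, Matrix.vecMulVec_apply, dotProduct, Finset.mul_sum, mul_comm,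
    mul_assoc, mul_left_comm]

lemma loss_eq {n : ℕ} (M : Matrix (Fin n) (Fin n) ℝ) (y : Fin n → ℝ) :
    rankOneLoss M y =
      (1/4) * ((∑ i, y i ^ 2) ^ 2 - 2 * (dotProduct y (M.mulVec y))
        + ∑ i, ∑ j, M i j ^ 2) := by
  rw [rankOneLoss, frobNorm_sq]
  congr 1
  have h : ∀ i j : Fin n, ((Matrix.vecMulVec y y - M) i j) ^ 2
      = y i ^2 * y j ^2 - 2 * (y i * (M i j * y j)) + M i j ^2 := by
    intro i j
    simp [Matrix.vecMulVec_apply, Matrix.sub_apply]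
    ring
  simp_rw [h, Finset.sum_add_distrib, Finset.sum_sub_distrib, ← Finset.mul_sum, ← Finset.sum_mul]
  have hd : dotProduct y (M.mulVec y) = ∑ i, y i * ∑ j, M i j * y j := by
    simp [dotProduct, Matrix.mulVec]
  rw [hd]; ring

lemma hess_quad {n : ℕ} (M : Matrix (Fin n) (Fin n) ℝ) (x v : Fin n → ℝ) :
    dotProduct v ((rankOneHess M x).mulVec v)
      = (∑ i, x i ^ 2) * (∑ i, v i ^ 2) + 2 * (dotProduct x v) ^ 2
        - dotProduct v (M.mulVec v) := by
  rw [rankOneHess, Matrix.sub_mulVec, Matrix.add_mulVec, Matrix.smul_mulVec,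
    Matrix.smul_mulVec, Matrix.one_mulVec, vecMulVec_mulVec']
  rw [dotProduct_sub, dotProduct_add, dotProduct_smul,
    dotProduct_smul, dotProduct_smul, l2norm_sq]
  simp [dotProduct, Finset.mul_sum, mul_comm, mul_assoc, mul_left_comm]
  ring_nf
  have h1 : ∑ i : Fin n, ∑ j : Fin n, v j ^ 2 * x i ^ 2 = ∑ i : Fin n, ∑ j : Fin n, x j ^ 2 * v i ^ 2 := by
    rw [Finset.sum_comm]
    exact Finset.sum_congr rfl fun i _ => Finset.sum_congr rfl fun j _ => by ring
  have h2 : (∑ i, x i * v i) ^ 2 = ∑ i : Fin n, ∑ j : Fin n, x i * x j * v i * v j := by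
    rw [sq, Finset.sum_mul_sum]
    exact Finset.sum_congr rfl fun i _ => Finset.sum_congr rfl fun j _ => by ring
  rw [h1, h2]
  simp_rw [Finset.sum_mul]

lemma sum_mulVec' {n : ℕ} (s : Finset (Fin n)) (f : Fin n → Matrix (Fin n) (Fin n) ℝ)
    (v : Fin n → ℝ) : (∑ i ∈ s, f i).mulVec v = ∑ i ∈ s, (f i).mulVec v := by
  funext j
  simp only [Matrix.mulVec, dotProduct, Finset.sum_apply, Matrix.sum_apply,
    Finset.sum_mul]
  rw [Finset.sum_comm]

lemma dotProduct_sum' {n : ℕ} (s : Finset (Fin n)) (f : Fin n → (Fin n → ℝ))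
    (v : Fin n → ℝ) :
    dotProduct v (∑ i ∈ s, f i) = ∑ i ∈ s, dotProduct v (f i) := by
  simp only [dotProduct, Finset.sum_apply, Finset.mul_sum]
  rw [Finset.sum_comm]

lemma dot_self {n : ℕ} (v : Fin n → ℝ) : dotProduct v v = ∑ i, v i ^ 2 := by
  simp [dotProduct, sq]

/-- **Global landscape of rank-1 matrix factorization.**
For `M = ∑ᵢ λᵢ uᵢuᵢᵀ` symmetric PSD with `λ₁ > λ₂ ≥ … ≥ λₙ ≥ 0` and `f(x) = ¼‖xxᵀ − M‖_F²`:
(i) `x` is a critical point iff `Mx = ‖x‖₂² x`; in particular `0` and `±√λₖ uₖ` are critical;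
(ii) `∇²f(±√λ₁ u₁) ≻ 0`, and `±√λ₁ u₁` are local (indeed global) minima;
(iii) for `k ≥ 2` with `λₖ > 0` the points `±√λₖ uₖ` are strict saddles:
`λ_min(∇²f) < 0 < λ_max(∇²f)` there;
(iv) `∇²f(0) = −M`, and `0` is a local maximum if `λₙ > 0`, while it is a strict saddle point
if `λₙ = 0` and `λ₁ > 0`. -/
theorem rank_one_factorization_global_landscape
    (n : ℕ) (hn : 1 < n)
    (M : Matrix (Fin n) (Fin n) ℝ)
    (lam : Fin n → ℝ) (u : Fin n → (Fin n → ℝ))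
    (horth : ∀ i j : Fin n, dotProduct (u i) (u j) = if i = j then 1 else 0)
    (hdecomp : M = ∑ i, lam i • Matrix.vecMulVec (u i) (u i))
    (hmono : Antitone lam)
    (hnonneg : ∀ i, 0 ≤ lam i)
    (hgap : lam ⟨1, hn⟩ < lam ⟨0, by omega⟩) :
    -- (i) characterization of critical points
    ((∀ x : Fin n → ℝ,
        Matrix.mulVec (Matrix.vecMulVec x x - M) x = 0 ↔
          M.mulVec x = l2norm x ^ 2 • x)
      ∧ Matrix.mulVec (Matrix.vecMulVec (0 : Fin n → ℝ) 0 - M) (0 : Fin n → ℝ) = 0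
      ∧ ∀ (k : Fin n) (ε : ℝ), ε = 1 ∨ ε = -1 →
          Matrix.mulVec
            (Matrix.vecMulVec ((ε * Real.sqrt (lam k)) • u k) ((ε * Real.sqrt (lam k)) • u k) - M)
            ((ε * Real.sqrt (lam k)) • u k) = 0)
    -- (ii) ±√λ₁ u₁ are local minima with positive definite Hessian, and global minima
    ∧ (∀ ε : ℝ, ε = 1 ∨ ε = -1 →
        (rankOneHess M ((ε * Real.sqrt (lam ⟨0, by omega⟩)) • u ⟨0, by omega⟩)).PosDef
        ∧ IsLocalMin (rankOneLoss M) ((ε * Real.sqrt (lam ⟨0, by omega⟩)) • u ⟨0, by omega⟩)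
        ∧ ∀ y : Fin n → ℝ,
            rankOneLoss M ((ε * Real.sqrt (lam ⟨0, by omega⟩)) • u ⟨0, by omega⟩)
              ≤ rankOneLoss M y)
    -- (iii) ±√λₖ uₖ (k ≥ 2, λₖ > 0) are strict saddle points
    ∧ (∀ k : Fin n, 1 ≤ (k : ℕ) → 0 < lam k → ∀ ε : ℝ, ε = 1 ∨ ε = -1 →
        (∃ v : Fin n → ℝ,
          dotProduct v
            ((rankOneHess M ((ε * Real.sqrt (lam k)) • u k)).mulVec v) < 0)
        ∧ (∃ w : Fin n → ℝ,
          0 < dotProduct w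
            ((rankOneHess M ((ε * Real.sqrt (lam k)) • u k)).mulVec w)))
    -- (iv) behavior at the origin
    ∧ (rankOneHess M (0 : Fin n → ℝ) = -M
        ∧ (0 < lam ⟨n - 1, by omega⟩ → IsLocalMax (rankOneLoss M) (0 : Fin n → ℝ))
        ∧ (lam ⟨n - 1, by omega⟩ = 0 → 0 < lam ⟨0, by omega⟩ →
            (∃ v : Fin n → ℝ,
              dotProduct v ((rankOneHess M (0 : Fin n → ℝ)).mulVec v) < 0)
            ∧ ¬ IsLocalMax (rankOneLoss M) (0 : Fin n → ℝ))) := by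
  -- ===== shared setup =====
  have hl1pos : 0 < lam ⟨0, by omega⟩ := lt_of_le_of_lt (hnonneg _) hgap
  have hMu : ∀ k, M.mulVec (u k) = lam k • u k := by
    intro k
    rw [hdecomp, sum_mulVec']
    have h : ∀ i : Fin n, (lam i • Matrix.vecMulVec (u i) (u i)).mulVec (u k)
        = (lam i * (if i = k then 1 else 0)) • u i := by
      intro i
      rw [Matrix.smul_mulVec, vecMulVec_mulVec', horth, smul_smul]
    simp_rw [h]
    rw [Finset.sum_eq_single k]
    · simp
    · intro b _ hb; simp [hb]
    · simp
  have hquadM : ∀ v, dotProduct v (M.mulVec v)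
      = ∑ i, lam i * (dotProduct (u i) v) ^ 2 := by
    intro v
    rw [hdecomp, sum_mulVec', dotProduct_sum']
    refine Finset.sum_congr rfl fun i _ => ?_
    rw [Matrix.smul_mulVec, vecMulVec_mulVec', dotProduct_smul,
      dotProduct_smul, smul_eq_mul, smul_eq_mul, dotProduct_comm]
    ring
  have hsum1 : (∑ k, Matrix.vecMulVec (u k) (u k)) = (1 : Matrix (Fin n) (Fin n) ℝ) := by
    have hUUT : (Matrix.of u) * (Matrix.of u)ᵀ = 1 := by
      ext i j
      simpa [Matrix.mul_apply, Matrix.one_apply, dotProduct] using horth i j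
    have hUTU := mul_eq_one_comm.mp hUUT
    ext i j
    have h2 := congrFun (congrFun hUTU i) j
    simpa [Matrix.mul_apply, Matrix.sum_apply, Matrix.vecMulVec_apply] using h2
  have hpars : ∀ v : Fin n → ℝ, ∑ i, v i ^ 2 = ∑ k, (dotProduct (u k) v) ^ 2 := by
    intro v
    have h := congrArg (fun A : Matrix (Fin n) (Fin n) ℝ => dotProduct v (A.mulVec v)) hsum1
    rw [sum_mulVec', dotProduct_sum', Matrix.one_mulVec, dot_self] at h
    rw [← h]
    refine Finset.sum_congr rfl fun k _ => ?_
    rw [vecMulVec_mulVec', dotProduct_smul, smul_eq_mul, dotProduct_comm, sq]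
  have hu_norm : ∀ k, ∑ i, (u k i) ^ 2 = 1 := by
    intro k
    rw [← dot_self]
    simpa using horth k k
  have hc2 : ∀ (k : Fin n) (ε : ℝ), ε = 1 ∨ ε = -1 →
      (ε * Real.sqrt (lam k)) * (ε * Real.sqrt (lam k)) = lam k := by
    intro k ε hε
    have h := Real.mul_self_sqrt (hnonneg k)
    have he : ε * ε = 1 := by rcases hε with h1 | h1 <;> subst h1 <;> norm_num
    calc (ε * Real.sqrt (lam k)) * (ε * Real.sqrt (lam k))
        = (ε * ε) * (Real.sqrt (lam k) * Real.sqrt (lam k)) := by ring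
      _ = lam k := by rw [he, one_mul, h]
  have hnormx : ∀ (k : Fin n) (ε : ℝ), ε = 1 ∨ ε = -1 →
      ∑ i, (((ε * Real.sqrt (lam k)) • u k) i) ^ 2 = lam k := by
    intro k ε hε
    simp only [Pi.smul_apply, smul_eq_mul, mul_pow]
    rw [← Finset.mul_sum, hu_norm k, mul_one]
    linear_combination hc2 k ε hε
  have hdotux : ∀ (k l : Fin n) (c : ℝ),
      dotProduct (c • u k) (u l) = c * (if k = l then 1 else 0) := by
    intro k l c
    rw [smul_dotProduct, horth, smul_eq_mul]
  have hquadu : ∀ i, dotProduct (u i) (M.mulVec (u i)) = lam i := by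
    intro i
    rw [hMu, dotProduct_smul, smul_eq_mul]
    simp [horth i i]
  have hxMx : ∀ (k : Fin n) (ε : ℝ), ε = 1 ∨ ε = -1 →
      dotProduct ((ε * Real.sqrt (lam k)) • u k)
        (M.mulVec ((ε * Real.sqrt (lam k)) • u k)) = lam k * lam k := by
    intro k ε hε
    rw [Matrix.mulVec_smul, smul_dotProduct, dotProduct_smul, hquadu k,
      smul_eq_mul, smul_eq_mul, ← mul_assoc, hc2 k ε hε]
  have hMsym : Mᵀ = M := by
    rw [hdecomp]
    ext i j
    simp only [Matrix.transpose_apply, Matrix.sum_apply, Matrix.smul_apply,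
      Matrix.vecMulVec_apply, smul_eq_mul]
    exact Finset.sum_congr rfl fun k _ => by ring
  have hkey : ∀ (k : Fin n) (ε : ℝ), ε = 1 ∨ ε = -1 → ∀ v : Fin n → ℝ,
      dotProduct v ((rankOneHess M ((ε * Real.sqrt (lam k)) • u k)).mulVec v)
        = ∑ i, (lam k - lam i) * (dotProduct (u i) v) ^ 2
          + 2 * lam k * (dotProduct (u k) v) ^ 2 := by
    intro k ε hε v
    rw [hess_quad, hquadM, hnormx k ε hε, hpars v, smul_dotProduct, smul_eq_mul,
      mul_pow]
    have hc2' : (ε * Real.sqrt (lam k)) ^ 2 = lam k := by rw [sq]; exact hc2 k ε hε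
    rw [hc2']
    have hs : ∑ i, (lam k - lam i) * (dotProduct (u i) v) ^ 2
        = lam k * ∑ i, (dotProduct (u i) v) ^ 2
          - ∑ i, lam i * (dotProduct (u i) v) ^ 2 := by
      rw [Finset.mul_sum, ← Finset.sum_sub_distrib]
      exact Finset.sum_congr rfl fun i _ => by ring
    rw [hs]; ring
  refine ⟨⟨?_, ?_, ?_⟩, ?_, ?_, ?_, ?_, ?_⟩
  -- (i) iff
  · intro x
    rw [Matrix.sub_mulVec, vecMulVec_mulVec', dot_self x, ← l2norm_sq, sub_eq_zero]
    exact eq_comm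
  -- (i) zero is critical
  · simp [Matrix.mulVec_zero]
  -- (i) ±√λₖ uₖ critical
  · intro k ε hε
    have h := hc2 k ε hε
    funext i
    simp only [Matrix.sub_mulVec, vecMulVec_mulVec', Matrix.mulVec_smul, hMu k,
      smul_dotProduct, dotProduct_smul, horth, if_pos rfl,
      Pi.sub_apply, Pi.smul_apply, smul_eq_mul, mul_one, Pi.zero_apply, if_true, eq_self_iff_true]
    linear_combination ((ε * Real.sqrt (lam k)) * u k i) * h
  -- (ii)
  · intro ε hε
    have hglobal : ∀ y : Fin n → ℝ,
        rankOneLoss M ((ε * Real.sqrt (lam ⟨0, by omega⟩)) • u ⟨0, by omega⟩)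
          ≤ rankOneLoss M y := by
      intro y
      rw [loss_eq, loss_eq, hnormx _ ε hε, hxMx _ ε hε]
      have hB : dotProduct y (M.mulVec y) ≤ lam ⟨0, by omega⟩ * ∑ i, y i ^ 2 := by
        rw [hquadM, hpars, Finset.mul_sum]
        refine Finset.sum_le_sum fun i _ => ?_
        exact mul_le_mul_of_nonneg_right (hmono (Fin.le_def.mpr (Nat.zero_le _))) (sq_nonneg _)
      have ht : (0:ℝ) ≤ ∑ i, y i ^ 2 := Finset.sum_nonneg fun i _ => sq_nonneg _
      nlinarith [sq_nonneg (∑ i, y i ^ 2 - lam ⟨0, by omega⟩)]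
    refine ⟨Matrix.PosDef.of_dotProduct_mulVec_pos ?_ ?_, ?_, hglobal⟩
    · -- Hermitian
      show _ᴴ = _
      ext i j
      have hms : M i j = M j i := congrFun (congrFun hMsym j) i
      simp only [rankOneHess, Matrix.conjTranspose_apply, Matrix.sub_apply, Matrix.add_apply,
        Matrix.smul_apply, Matrix.one_apply, Matrix.vecMulVec_apply, star_trivial,
        smul_eq_mul, Pi.smul_apply]
      rw [hms]
      ring_nf
      congr 1
      simp [eq_comm]
    · -- positivity
      intro v hv
      rw [star_trivial, hkey _ ε hε v]
      have hnn : ∀ i : Fin n, i ∈ Finset.univ →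
          0 ≤ (lam ⟨0, by omega⟩ - lam i) * (dotProduct (u i) v) ^ 2 := by
        intro i _
        exact mul_nonneg (sub_nonneg.mpr (hmono (Fin.le_def.mpr (Nat.zero_le _)))) (sq_nonneg _)
      by_cases hc0 : dotProduct (u ⟨0, by omega⟩) v = 0
      · -- find another nonzero coefficient
        have hvsum : 0 < ∑ i, v i ^ 2 := by
          obtain ⟨j, hj⟩ := Function.ne_iff.mp hv
          exact Finset.sum_pos' (fun i _ => sq_nonneg _)
            ⟨j, Finset.mem_univ j, lt_of_le_of_ne (sq_nonneg _) (Ne.symm (pow_ne_zero 2 hj))⟩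
        rw [hpars] at hvsum
        have hex : ∃ i : Fin n, dotProduct (u i) v ≠ 0 := by
          by_contra hall
          push_neg at hall
          simp [hall] at hvsum
        obtain ⟨i, hi⟩ := hex
        have hine : i ≠ ⟨0, by omega⟩ := by
          intro h; rw [h] at hi; exact hi hc0
        have hi1 : 1 ≤ (i : ℕ) := by
          rcases Nat.eq_zero_or_pos (i : ℕ) with h | h
          · exact absurd (Fin.ext h) hine
          · omega
        have hlt : lam i < lam ⟨0, by omega⟩ :=
          lt_of_le_of_lt (hmono (Fin.le_def.mpr hi1)) hgap
        have hpos : 0 < ∑ i, (lam ⟨0, by omega⟩ - lam i) * (dotProduct (u i) v) ^ 2 :=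
          Finset.sum_pos' hnn ⟨i, Finset.mem_univ i, by
            have : 0 < (dotProduct (u i) v) ^ 2 :=
              lt_of_le_of_ne (sq_nonneg _) (Ne.symm (pow_ne_zero 2 hi))
            nlinarith⟩
        rw [hc0]
        nlinarith
      · have h1 : 0 < 2 * lam ⟨0, by omega⟩ * (dotProduct (u ⟨0, by omega⟩) v) ^ 2 := by
          have : 0 < (dotProduct (u ⟨0, by omega⟩) v) ^ 2 :=
            lt_of_le_of_ne (sq_nonneg _) (Ne.symm (pow_ne_zero 2 hc0))
          nlinarith
        have h2 : 0 ≤ ∑ i, (lam ⟨0, by omega⟩ - lam i) * (dotProduct (u i) v) ^ 2 :=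
          Finset.sum_nonneg hnn
        linarith
    · exact Filter.Eventually.of_forall hglobal
  -- (iii)
  · intro k hk1 hkpos ε hε
    have hkne : k ≠ ⟨0, by omega⟩ := by
      intro h
      rw [h] at hk1
      simp at hk1
    constructor
    · refine ⟨u ⟨0, by omega⟩, ?_⟩
      rw [hkey k ε hε]
      have hsum : ∑ i, (lam k - lam i) * (dotProduct (u i) (u ⟨0, by omega⟩)) ^ 2
          = lam k - lam ⟨0, by omega⟩ := by
        rw [Finset.sum_eq_single (⟨0, by omega⟩ : Fin n)]
        · rw [horth]; simp
        · intro b _ hb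
          rw [horth]
          simp [hb]
        · simp
      rw [hsum, horth]
      have hk0 : lam k < lam ⟨0, by omega⟩ :=
        lt_of_le_of_lt (hmono (Fin.le_def.mpr hk1)) hgap
      simp only [if_neg hkne]
      nlinarith
    · refine ⟨u k, ?_⟩
      rw [hkey k ε hε]
      have hsum : ∑ i, (lam k - lam i) * (dotProduct (u i) (u k)) ^ 2 = 0 := by
        rw [Finset.sum_eq_single k]
        · simp
        · intro b _ hb
          rw [horth]
          simp [hb]
        · simp
      rw [hsum, horth]
      simp only [eq_self_iff_true, if_true]
      nlinarith
  -- (iv) Hessian at 0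
  · ext i j
    simp [rankOneHess, l2norm, Matrix.vecMulVec_apply, Matrix.one_apply]
  -- (iv) local max
  · intro hpos
    have hScont : Continuous fun y : Fin n → ℝ => ∑ i, y i ^ 2 :=
      continuous_finset_sum _ fun i _ => (continuous_apply i).pow 2
    have hopen : IsOpen {y : Fin n → ℝ | ∑ i, y i ^ 2 < 2 * lam ⟨n - 1, by omega⟩} :=
      isOpen_lt hScont continuous_const
    have h0z : ∑ i, ((0 : Fin n → ℝ) i) ^ 2 = 0 := by simp
    have h0mem : (0 : Fin n → ℝ) ∈ {y : Fin n → ℝ | ∑ i, y i ^ 2 < 2 * lam ⟨n - 1, by omega⟩} := by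
      simp only [Set.mem_setOf_eq, h0z]
      positivity
    filter_upwards [hopen.mem_nhds h0mem] with y hy
    have hy' : ∑ i, y i ^ 2 < 2 * lam ⟨n - 1, by omega⟩ := hy
    rw [loss_eq, loss_eq]
    have hB : lam ⟨n - 1, by omega⟩ * ∑ i, y i ^ 2 ≤ dotProduct y (M.mulVec y) := by
      rw [hquadM, hpars, Finset.mul_sum]
      refine Finset.sum_le_sum fun i _ => ?_
      refine mul_le_mul_of_nonneg_right (hmono (Fin.le_def.mpr ?_)) (sq_nonneg _)
      show (i : ℕ) ≤ n - 1
      have := i.isLt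
      omega
    have ht : (0:ℝ) ≤ ∑ i, y i ^ 2 := Finset.sum_nonneg fun i _ => sq_nonneg _
    have h0a : ∑ i, ((0 : Fin n → ℝ) i) ^ 2 = 0 := by simp
    have h0b : dotProduct (0 : Fin n → ℝ) (M.mulVec (0 : Fin n → ℝ)) = 0 := by simp
    rw [h0a, h0b]
    nlinarith
  -- (iv) strict saddle at 0
  · intro hlamn hlam0
    have hHess0 : rankOneHess M (0 : Fin n → ℝ) = -M := by
      ext i j
      simp [rankOneHess, l2norm, Matrix.vecMulVec_apply, Matrix.one_apply]
    constructor
    · refine ⟨u ⟨0, by omega⟩, ?_⟩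
      rw [hHess0, Matrix.neg_mulVec, dotProduct_neg, hquadu]
      linarith
    · intro hmax
      have hcont : Continuous fun t : ℝ => t • u ⟨n - 1, by omega⟩ :=
        continuous_id.smul continuous_const
      have hten : Filter.Tendsto (fun t : ℝ => t • u ⟨n - 1, by omega⟩) (nhds 0)
          (nhds (0 : Fin n → ℝ)) := by
        have h := hcont.tendsto 0
        simpa using h
      have h2 := hten.eventually hmax
      have h3 : ∀ᶠ t in nhdsWithin (0:ℝ) {0}ᶜ,
          rankOneLoss M (t • u ⟨n - 1, by omega⟩) ≤ rankOneLoss M 0 :=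
        h2.filter_mono nhdsWithin_le_nhds
      have h4 : ∀ᶠ t in nhdsWithin (0:ℝ) {0}ᶜ, t ∈ ({0}ᶜ : Set ℝ) :=
        eventually_mem_nhdsWithin
      obtain ⟨t, hle, hmem⟩ := (h3.and h4).exists
      have htne : t ≠ 0 := hmem
      rw [loss_eq, loss_eq] at hle
      have hns : ∑ i, ((t • u ⟨n - 1, by omega⟩) i) ^ 2 = t ^ 2 := by
        simp only [Pi.smul_apply, smul_eq_mul, mul_pow]
        rw [← Finset.mul_sum, hu_norm, mul_one]
      have hdM : dotProduct (t • u ⟨n - 1, by omega⟩)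
          (M.mulVec (t • u ⟨n - 1, by omega⟩)) = 0 := by
        rw [Matrix.mulVec_smul, smul_dotProduct, dotProduct_smul, hquadu,
          hlamn]
        simp
      have h0a : ∑ i, ((0 : Fin n → ℝ) i) ^ 2 = 0 := by simp
      have h0b : dotProduct (0 : Fin n → ℝ) (M.mulVec (0 : Fin n → ℝ)) = 0 := by simp
      rw [hns, hdM, h0a, h0b] at hle
      have ht2 : 0 < t ^ 2 := lt_of_le_of_ne (sq_nonneg _) (Ne.symm (pow_ne_zero 2 htne))
      nlinarith
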